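/- For every integer ℓ ≥ 500, there exists an admissible cyclic {3,4,5}-partition 𝔞 of ℓ such that for all (a,b) ∈ {3,4,5}×{3,4,5}, the number of cyclic occurrences of the length-12 pattern (a,b,a,b,a,b,a,b,a,b,a,b) in 𝔞 is at least ℓ/200. -/

import Mathlib

set_option linter.unusedSectionVars false
set_option linter.unnecessarySeqFocus false

namespace Stmt1Aux

/-- The cyclic word `3^p (43)^m (53)^m 4^q (54)^m 5^r 4 3` of length
`t = p+q+r+6m+2` and sum `3p+4q+5r+24m+7`. -/
def W (p q r m : ℕ) (i : ℕ) : ℕ :=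
  if i < p then 3
  else if i < p + 2*m then (if (i - p) % 2 = 0 then 4 else 3)
  else if i < p + 4*m then (if (i - p) % 2 = 0 then 5 else 3)
  else if i < p + 4*m + q then 4
  else if i < p + 6*m + q then (if (i - p - q) % 2 = 0 then 5 else 4)
  else if i < p + 6*m + q + r then 5
  else if i = p + 6*m + q + r then 4
  else 3

variable {p q r m : ℕ}

lemma w3a {i : ℕ} (h : i < p) : W p q r m i = 3 := by
  unfold W; split_ifs <;> omega

lemma w4b {i : ℕ} (h1 : p ≤ i) (h2 : i < p + 2*m) (h3 : (i - p) % 2 = 0) :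
    W p q r m i = 4 := by unfold W; split_ifs <;> omega

lemma w3b {i : ℕ} (h1 : p ≤ i) (h2 : i < p + 2*m) (h3 : (i - p) % 2 = 1) :
    W p q r m i = 3 := by unfold W; split_ifs <;> omega

lemma w5c {i : ℕ} (h1 : p + 2*m ≤ i) (h2 : i < p + 4*m) (h3 : (i - p) % 2 = 0) :
    W p q r m i = 5 := by unfold W; split_ifs <;> omega

lemma w3c {i : ℕ} (h1 : p + 2*m ≤ i) (h2 : i < p + 4*m) (h3 : (i - p) % 2 = 1) :
    W p q r m i = 3 := by unfold W; split_ifs <;> omega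

lemma w4d {i : ℕ} (h1 : p + 4*m ≤ i) (h2 : i < p + 4*m + q) :
    W p q r m i = 4 := by unfold W; split_ifs <;> omega

lemma w5e {i : ℕ} (h1 : p + 4*m + q ≤ i) (h2 : i < p + 6*m + q) (h3 : (i - p - q) % 2 = 0) :
    W p q r m i = 5 := by unfold W; split_ifs <;> omega

lemma w4e {i : ℕ} (h1 : p + 4*m + q ≤ i) (h2 : i < p + 6*m + q) (h3 : (i - p - q) % 2 = 1) :
    W p q r m i = 4 := by unfold W; split_ifs <;> omega

lemma w5f {i : ℕ} (h1 : p + 6*m + q ≤ i) (h2 : i < p + 6*m + q + r) :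
    W p q r m i = 5 := by unfold W; split_ifs <;> omega

lemma w4g : W p q r m (p + 6*m + q + r) = 4 := by
  unfold W; split_ifs <;> omega

lemma w3g : W p q r m (p + 6*m + q + r + 1) = 3 := by
  unfold W; split_ifs <;> omega

section letters
variable (hp : 14 ≤ p) (hq : 14 ≤ q) (hr : 14 ≤ r) (hm : 9 ≤ m)
include hp hq hr hm

lemma ch3 {i : ℕ} (hi : i < p+q+r+6*m+2) :
    W p q r m i = 3 ↔
      (i < p ∨ (p ≤ i ∧ i < p + 4*m ∧ (i - p) % 2 = 1) ∨ i = p+q+r+6*m+1) := by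
  unfold W; split_ifs <;> omega

lemma ch4 {i : ℕ} (hi : i < p+q+r+6*m+2) :
    W p q r m i = 4 ↔
      ((p ≤ i ∧ i < p + 2*m ∧ (i - p) % 2 = 0) ∨ (p + 4*m ≤ i ∧ i < p + 4*m + q) ∨
        (p + 4*m + q ≤ i ∧ i < p + 6*m + q ∧ (i - p - q) % 2 = 1) ∨ i = p+q+r+6*m) := by
  unfold W; split_ifs <;> omega

lemma ch5 {i : ℕ} (hi : i < p+q+r+6*m+2) :
    W p q r m i = 5 ↔
      ((p + 2*m ≤ i ∧ i < p + 4*m ∧ (i - p) % 2 = 0) ∨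
        (p + 4*m + q ≤ i ∧ i < p + 6*m + q ∧ (i - p - q) % 2 = 0) ∨
        (p + 6*m + q ≤ i ∧ i < p + 6*m + q + r)) := by
  unfold W; split_ifs <;> omega

lemma p34 {i : ℕ} (hi : i < p+q+r+6*m+2) :
    (W p q r m i = 3 ∧ W p q r m ((i+1) % (p+q+r+6*m+2)) = 4) ↔
      (i = p-1 ∨ (p ≤ i ∧ i < p+2*m-2 ∧ (i-p) % 2 = 1) ∨ i = p+4*m-1) := by
  rcases Nat.lt_or_ge (i+1) (p+q+r+6*m+2) with hlt | hge
  · rw [Nat.mod_eq_of_lt hlt, ch3 hp hq hr hm hi, ch4 hp hq hr hm hlt]; omega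
  · have he : i + 1 = p+q+r+6*m+2 := by omega
    rw [he, Nat.mod_self, ch3 hp hq hr hm hi,
      ch4 hp hq hr hm (show 0 < p+q+r+6*m+2 by omega)]
    omega

lemma p43 {i : ℕ} (hi : i < p+q+r+6*m+2) :
    (W p q r m i = 4 ∧ W p q r m ((i+1) % (p+q+r+6*m+2)) = 3) ↔
      ((p ≤ i ∧ i < p+2*m ∧ (i-p) % 2 = 0) ∨ i = p+q+r+6*m) := by
  rcases Nat.lt_or_ge (i+1) (p+q+r+6*m+2) with hlt | hge
  · rw [Nat.mod_eq_of_lt hlt, ch4 hp hq hr hm hi, ch3 hp hq hr hm hlt]; omega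
  · have he : i + 1 = p+q+r+6*m+2 := by omega
    rw [he, Nat.mod_self, ch4 hp hq hr hm hi,
      ch3 hp hq hr hm (show 0 < p+q+r+6*m+2 by omega)]
    omega

lemma p35 {i : ℕ} (hi : i < p+q+r+6*m+2) :
    (W p q r m i = 3 ∧ W p q r m ((i+1) % (p+q+r+6*m+2)) = 5) ↔
      (p+2*m-1 ≤ i ∧ i < p+4*m-2 ∧ (i-p) % 2 = 1) := by
  rcases Nat.lt_or_ge (i+1) (p+q+r+6*m+2) with hlt | hge
  · rw [Nat.mod_eq_of_lt hlt, ch3 hp hq hr hm hi, ch5 hp hq hr hm hlt]; omega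
  · have he : i + 1 = p+q+r+6*m+2 := by omega
    rw [he, Nat.mod_self, ch3 hp hq hr hm hi,
      ch5 hp hq hr hm (show 0 < p+q+r+6*m+2 by omega)]
    omega

lemma p53 {i : ℕ} (hi : i < p+q+r+6*m+2) :
    (W p q r m i = 5 ∧ W p q r m ((i+1) % (p+q+r+6*m+2)) = 3) ↔
      (p+2*m ≤ i ∧ i < p+4*m ∧ (i-p) % 2 = 0) := by
  rcases Nat.lt_or_ge (i+1) (p+q+r+6*m+2) with hlt | hge
  · rw [Nat.mod_eq_of_lt hlt, ch5 hp hq hr hm hi, ch3 hp hq hr hm hlt]; omega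
  · have he : i + 1 = p+q+r+6*m+2 := by omega
    rw [he, Nat.mod_self, ch5 hp hq hr hm hi,
      ch3 hp hq hr hm (show 0 < p+q+r+6*m+2 by omega)]
    omega

lemma p45 {i : ℕ} (hi : i < p+q+r+6*m+2) :
    (W p q r m i = 4 ∧ W p q r m ((i+1) % (p+q+r+6*m+2)) = 5) ↔
      (i = p+4*m+q-1 ∨ (p+4*m+q ≤ i ∧ i < p+6*m+q-2 ∧ (i-p-q) % 2 = 1) ∨ i = p+6*m+q-1) := by
  rcases Nat.lt_or_ge (i+1) (p+q+r+6*m+2) with hlt | hge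
  · rw [Nat.mod_eq_of_lt hlt, ch4 hp hq hr hm hi, ch5 hp hq hr hm hlt]; omega
  · have he : i + 1 = p+q+r+6*m+2 := by omega
    rw [he, Nat.mod_self, ch4 hp hq hr hm hi,
      ch5 hp hq hr hm (show 0 < p+q+r+6*m+2 by omega)]
    omega

lemma p54 {i : ℕ} (hi : i < p+q+r+6*m+2) :
    (W p q r m i = 5 ∧ W p q r m ((i+1) % (p+q+r+6*m+2)) = 4) ↔
      ((p+4*m+q ≤ i ∧ i < p+6*m+q ∧ (i-p-q) % 2 = 0) ∨ i = p+6*m+q+r-1) := by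
  rcases Nat.lt_or_ge (i+1) (p+q+r+6*m+2) with hlt | hge
  · rw [Nat.mod_eq_of_lt hlt, ch5 hp hq hr hm hi, ch4 hp hq hr hm hlt]; omega
  · have he : i + 1 = p+q+r+6*m+2 := by omega
    rw [he, Nat.mod_self, ch5 hp hq hr hm hi,
      ch4 hp hq hr hm (show 0 < p+q+r+6*m+2 by omega)]
    omega

lemma e34 :
    ((Finset.range (p+q+r+6*m+2)).filter
      fun i => W p q r m i = 3 ∧ W p q r m ((i+1) % (p+q+r+6*m+2)) = 4).card =
    ((Finset.range (p+q+r+6*m+2)).filter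
      fun i => W p q r m i = 4 ∧ W p q r m ((i+1) % (p+q+r+6*m+2)) = 3).card := by
  apply Finset.card_nbij' (fun i => if i = p+4*m-1 then p+q+r+6*m else i+1)
    (fun j => if j = p+q+r+6*m then p+4*m-1 else j-1)
  · intro i hi
    simp only [Finset.mem_coe, Finset.mem_filter, Finset.mem_range] at hi ⊢
    obtain ⟨hit, hPi⟩ := hi
    rw [p34 hp hq hr hm hit] at hPi
    by_cases hA : i = p+4*m-1
    · rw [if_pos hA]
      exact ⟨by omega, (p43 hp hq hr hm (by omega)).2 (by omega)⟩
    · rw [if_neg hA]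
      exact ⟨by omega, (p43 hp hq hr hm (by omega)).2 (by omega)⟩
  · intro j hj
    simp only [Finset.mem_coe, Finset.mem_filter, Finset.mem_range] at hj ⊢
    obtain ⟨hjt, hPj⟩ := hj
    rw [p43 hp hq hr hm hjt] at hPj
    by_cases hA : j = p+q+r+6*m
    · rw [if_pos hA]
      exact ⟨by omega, (p34 hp hq hr hm (by omega)).2 (by omega)⟩
    · rw [if_neg hA]
      exact ⟨by omega, (p34 hp hq hr hm (by omega)).2 (by omega)⟩
  · intro i hi
    simp only [Finset.mem_coe, Finset.mem_filter, Finset.mem_range] at hi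
    obtain ⟨hit, hPi⟩ := hi
    rw [p34 hp hq hr hm hit] at hPi
    beta_reduce; split_ifs <;> omega
  · intro j hj
    simp only [Finset.mem_coe, Finset.mem_filter, Finset.mem_range] at hj
    obtain ⟨hjt, hPj⟩ := hj
    rw [p43 hp hq hr hm hjt] at hPj
    beta_reduce; split_ifs <;> omega

lemma e35 :
    ((Finset.range (p+q+r+6*m+2)).filter
      fun i => W p q r m i = 3 ∧ W p q r m ((i+1) % (p+q+r+6*m+2)) = 5).card =
    ((Finset.range (p+q+r+6*m+2)).filter
      fun i => W p q r m i = 5 ∧ W p q r m ((i+1) % (p+q+r+6*m+2)) = 3).card := by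
  apply Finset.card_nbij' (fun i => i+1) (fun j => j-1)
  · intro i hi
    simp only [Finset.mem_coe, Finset.mem_filter, Finset.mem_range] at hi ⊢
    obtain ⟨hit, hPi⟩ := hi
    rw [p35 hp hq hr hm hit] at hPi
    exact ⟨by omega, (p53 hp hq hr hm (by omega)).2 (by omega)⟩
  · intro j hj
    simp only [Finset.mem_coe, Finset.mem_filter, Finset.mem_range] at hj ⊢
    obtain ⟨hjt, hPj⟩ := hj
    rw [p53 hp hq hr hm hjt] at hPj
    exact ⟨by omega, (p35 hp hq hr hm (by omega)).2 (by omega)⟩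
  · intro i hi
    simp only [Finset.mem_coe, Finset.mem_filter, Finset.mem_range] at hi
    obtain ⟨hit, hPi⟩ := hi
    rw [p35 hp hq hr hm hit] at hPi
    beta_reduce; omega
  · intro j hj
    simp only [Finset.mem_coe, Finset.mem_filter, Finset.mem_range] at hj
    obtain ⟨hjt, hPj⟩ := hj
    rw [p53 hp hq hr hm hjt] at hPj
    beta_reduce; omega

lemma e45 :
    ((Finset.range (p+q+r+6*m+2)).filter
      fun i => W p q r m i = 4 ∧ W p q r m ((i+1) % (p+q+r+6*m+2)) = 5).card =
    ((Finset.range (p+q+r+6*m+2)).filter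
      fun i => W p q r m i = 5 ∧ W p q r m ((i+1) % (p+q+r+6*m+2)) = 4).card := by
  apply Finset.card_nbij' (fun i => if i = p+6*m+q-1 then p+6*m+q+r-1 else i+1)
    (fun j => if j = p+6*m+q+r-1 then p+6*m+q-1 else j-1)
  · intro i hi
    simp only [Finset.mem_coe, Finset.mem_filter, Finset.mem_range] at hi ⊢
    obtain ⟨hit, hPi⟩ := hi
    rw [p45 hp hq hr hm hit] at hPi
    by_cases hA : i = p+6*m+q-1
    · rw [if_pos hA]
      exact ⟨by omega, (p54 hp hq hr hm (by omega)).2 (by omega)⟩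
    · rw [if_neg hA]
      exact ⟨by omega, (p54 hp hq hr hm (by omega)).2 (by omega)⟩
  · intro j hj
    simp only [Finset.mem_coe, Finset.mem_filter, Finset.mem_range] at hj ⊢
    obtain ⟨hjt, hPj⟩ := hj
    rw [p54 hp hq hr hm hjt] at hPj
    by_cases hA : j = p+6*m+q+r-1
    · rw [if_pos hA]
      exact ⟨by omega, (p45 hp hq hr hm (by omega)).2 (by omega)⟩
    · rw [if_neg hA]
      exact ⟨by omega, (p45 hp hq hr hm (by omega)).2 (by omega)⟩
  · intro i hi
    simp only [Finset.mem_coe, Finset.mem_filter, Finset.mem_range] at hi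
    obtain ⟨hit, hPi⟩ := hi
    rw [p45 hp hq hr hm hit] at hPi
    beta_reduce; split_ifs <;> omega
  · intro j hj
    simp only [Finset.mem_coe, Finset.mem_filter, Finset.mem_range] at hj
    obtain ⟨hjt, hPj⟩ := hj
    rw [p54 hp hq hr hm hjt] at hPj
    beta_reduce; split_ifs <;> omega

end letters

/-- sum of an alternating block -/
lemma altsum (x y : ℕ) : ∀ mm : ℕ,
    ∑ k ∈ Finset.range (2*mm), (if k % 2 = 0 then x else y) = mm*(x+y)
  | 0 => by simp
  | n+1 => by
    have h2 : 2*(n+1) = (2*n)+1+1 := by ring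
    rw [h2, Finset.sum_range_succ, Finset.sum_range_succ, altsum x y n]
    have e1 : (2*n) % 2 = 0 := by omega
    rw [if_pos e1, if_neg (by omega)]
    ring

lemma chunk_const (f : ℕ → ℕ) (a b v : ℕ)
    (h : ∀ i, a ≤ i → i < b → f i = v) :
    ∑ i ∈ Finset.Ico a b, f i = (b-a)*v := by
  rw [Finset.sum_congr rfl
    (fun i hi => h i (Finset.mem_Ico.mp hi).1 (Finset.mem_Ico.mp hi).2)]
  simp [Finset.sum_const, Nat.card_Ico, mul_comm]

lemma chunk_alt (f : ℕ → ℕ) (a mm x y : ℕ)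
    (h : ∀ i, a ≤ i → i < a + 2*mm → f i = if (i - a) % 2 = 0 then x else y) :
    ∑ i ∈ Finset.Ico a (a + 2*mm), f i = mm*(x+y) := by
  rw [Finset.sum_congr rfl
    (fun i hi => h i (Finset.mem_Ico.mp hi).1 (Finset.mem_Ico.mp hi).2)]
  rw [Finset.sum_Ico_eq_sum_range]
  have hd : a + 2*mm - a = 2*mm := by omega
  rw [hd]
  rw [Finset.sum_congr rfl (fun k _ => by rw [Nat.add_sub_cancel_left])]
  exact altsum x y mm

lemma sumW (hp : 14 ≤ p) (hq : 14 ≤ q) (hr : 14 ≤ r) (hm : 9 ≤ m) :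
    ∑ i ∈ Finset.range (p+q+r+6*m+2), W p q r m i = 3*p+4*q+5*r+24*m+7 := by
  rw [Finset.range_eq_Ico]
  rw [← Finset.sum_Ico_consecutive _ (Nat.zero_le p) (show p ≤ p+q+r+6*m+2 by omega)]
  rw [← Finset.sum_Ico_consecutive _ (show p ≤ p+2*m by omega)
      (show p+2*m ≤ p+q+r+6*m+2 by omega)]
  rw [← Finset.sum_Ico_consecutive _ (show p+2*m ≤ p+4*m by omega)
      (show p+4*m ≤ p+q+r+6*m+2 by omega)]
  rw [← Finset.sum_Ico_consecutive _ (show p+4*m ≤ p+4*m+q by omega)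
      (show p+4*m+q ≤ p+q+r+6*m+2 by omega)]
  rw [← Finset.sum_Ico_consecutive _ (show p+4*m+q ≤ p+6*m+q by omega)
      (show p+6*m+q ≤ p+q+r+6*m+2 by omega)]
  rw [← Finset.sum_Ico_consecutive _ (show p+6*m+q ≤ p+6*m+q+r by omega)
      (show p+6*m+q+r ≤ p+q+r+6*m+2 by omega)]
  have c1 : ∑ i ∈ Finset.Ico 0 p, W p q r m i = (p-0)*3 :=
    chunk_const _ 0 p 3 (fun i _ h2 => w3a h2)
  have c2 : ∑ i ∈ Finset.Ico p (p+2*m), W p q r m i = m*(4+3) :=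
    chunk_alt _ p m 4 3 (fun i h1 h2 => by
      rcases Nat.mod_two_eq_zero_or_one (i - p) with h3 | h3
      · rw [if_pos h3]; exact w4b h1 h2 h3
      · rw [if_neg (by omega)]; exact w3b h1 h2 h3)
  have e3 : p + 4*m = (p+2*m) + 2*m := by ring
  have c3 : ∑ i ∈ Finset.Ico (p+2*m) (p+4*m), W p q r m i = m*(5+3) := by
    rw [e3]
    exact chunk_alt _ (p+2*m) m 5 3 (fun i h1 h2 => by
      rcases Nat.mod_two_eq_zero_or_one (i - (p+2*m)) with h3 | h3
      · rw [if_pos h3]; exact w5c h1 (by omega) (by omega)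
      · rw [if_neg (by omega)]; exact w3c h1 (by omega) (by omega))
  have c4 : ∑ i ∈ Finset.Ico (p+4*m) (p+4*m+q), W p q r m i = (p+4*m+q-(p+4*m))*4 :=
    chunk_const _ _ _ 4 (fun i h1 h2 => w4d h1 h2)
  have e5 : p + 6*m + q = (p+4*m+q) + 2*m := by ring
  have c5 : ∑ i ∈ Finset.Ico (p+4*m+q) (p+6*m+q), W p q r m i = m*(5+4) := by
    rw [e5]
    exact chunk_alt _ (p+4*m+q) m 5 4 (fun i h1 h2 => by
      rcases Nat.mod_two_eq_zero_or_one (i - (p+4*m+q)) with h3 | h3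
      · rw [if_pos h3]; exact w5e h1 (by omega) (by omega)
      · rw [if_neg (by omega)]; exact w4e h1 (by omega) (by omega))
  have c6 : ∑ i ∈ Finset.Ico (p+6*m+q) (p+6*m+q+r), W p q r m i
      = (p+6*m+q+r-(p+6*m+q))*5 :=
    chunk_const _ _ _ 5 (fun i h1 h2 => w5f h1 h2)
  have c7 : ∑ i ∈ Finset.Ico (p+6*m+q+r) (p+q+r+6*m+2), W p q r m i = 7 := by
    have e7 : p+q+r+6*m+2 = (p+6*m+q+r) + 1 + 1 := by ring
    rw [e7, Finset.sum_Ico_succ_top (by omega), Finset.sum_Ico_succ_top (by omega)]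
    have he : Finset.Ico (p+6*m+q+r) (p+6*m+q+r) = ∅ := by simp
    rw [he]
    simp only [Finset.sum_empty]
    rw [w4g, w3g]
  rw [c1, c2, c3, c4, c5, c6, c7]
  omega

/-- window membership helper -/
lemma window (a : ℕ → ℕ) {t i : ℕ} (x y : ℕ) (hit : i + 11 < t)
    (h : ∀ j < 12, a (i+j) = if j % 2 = 0 then x else y) :
    i ∈ (Finset.range t).filter (fun i =>
      ((Finset.range 12).filter fun j => a ((i+j) % t) = if j % 2 = 0 then x else y).card = 12) := by
  simp only [Finset.mem_filter, Finset.mem_range]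
  refine ⟨by omega, ?_⟩
  rw [Finset.filter_true_of_mem, Finset.card_range]
  intro j hj
  simp only [Finset.mem_range] at hj
  rw [Nat.mod_eq_of_lt (by omega)]
  exact h j hj

lemma count_ge {t c s0 d : ℕ} (a : ℕ → ℕ) (x y : ℕ) (hd : 0 < d)
    (h : ∀ k < c, s0 + d*k ∈ (Finset.range t).filter (fun i =>
      ((Finset.range 12).filter fun j => a ((i+j) % t) = if j % 2 = 0 then x else y).card = 12)) :
    c ≤ ((Finset.range t).filter (fun i =>
      ((Finset.range 12).filter fun j => a ((i+j) % t) = if j % 2 = 0 then x else y).card = 12)).card := by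
  have hinj : Set.InjOn (fun k => s0 + d*k) (Finset.range c) := by
    intro a1 _ a2 _ hab
    simp only at hab
    have : d * a1 = d * a2 := by omega
    exact Nat.eq_of_mul_eq_mul_left hd this
  calc c = (Finset.range c).card := (Finset.card_range c).symm
    _ = ((Finset.range c).image fun k => s0 + d*k).card := (Finset.card_image_of_injOn hinj).symm
    _ ≤ _ := by
        apply Finset.card_le_card
        intro i hi
        simp only [Finset.mem_image, Finset.mem_range] at hi
        obtain ⟨k, hk, rfl⟩ := hi
        exact h k hk

lemma final_step {ℓ c n : ℕ} (h1 : ℓ ≤ 200*c) (h2 : c ≤ n) : (ℓ:ℝ)/200 ≤ (n:ℝ) := by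
  rw [div_le_iff₀ (by norm_num : (0:ℝ) < 200)]
  have h3 : ℓ ≤ n * 200 := by omega
  exact_mod_cast h3

end Stmt1Aux

open Stmt1Aux in
/-- For every `ℓ ≥ 500` there is an admissible cyclic `{3,4,5}`-partition of `ℓ`
in which every alternating pattern `(a,b)^6` of length 12 occurs cyclically
at least `ℓ/200` times. -/
theorem stmt_1 (ℓ : ℕ) (hℓ : 500 ≤ ℓ) :
    ∃ (t : ℕ) (a : ℕ → ℕ), 0 < t ∧
      (∀ i < t, a i ∈ ({3, 4, 5} : Finset ℕ)) ∧
      (∑ i ∈ Finset.range t, a i) = ℓ ∧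
      (∀ x ∈ ({3, 4, 5} : Finset ℕ), ∀ y ∈ ({3, 4, 5} : Finset ℕ),
        ((Finset.range t).filter fun i => a i = x ∧ a ((i + 1) % t) = y).card =
        ((Finset.range t).filter fun i => a i = y ∧ a ((i + 1) % t) = x).card) ∧
      (∀ x ∈ ({3, 4, 5} : Finset ℕ), ∀ y ∈ ({3, 4, 5} : Finset ℕ),
        (ℓ : ℝ) / 200 ≤
          (((Finset.range t).filter fun i =>
            ((Finset.range 12).filter fun j =>
              a ((i + j) % t) = if j % 2 = 0 then x else y).card = 12).card : ℝ)) := by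
  obtain ⟨p, q, r, m, hp, hq, hr, hm, hpc, hqc, hrc, hmc, hsum⟩ :
      ∃ p q r m : ℕ, 14 ≤ p ∧ 14 ≤ q ∧ 14 ≤ r ∧ 9 ≤ m ∧
        ℓ/200 + 12 ≤ p ∧ ℓ/200 + 12 ≤ q ∧ ℓ/200 + 12 ≤ r ∧ m = ℓ/200 + 7 ∧
        3*p + 4*q + 5*r + 24*m + 7 = ℓ := by
    refine ⟨ℓ/200 + 12 + (3*(ℓ - 36*(ℓ/200+1) - 283)) % 4,
      ℓ/200 + 12 + ((ℓ - 36*(ℓ/200+1) - 283) - 3*((3*(ℓ - 36*(ℓ/200+1) - 283)) % 4))/4,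
      ℓ/200 + 12, ℓ/200 + 7, ?_, ?_, ?_, ?_, ?_, ?_, ?_, ?_, ?_⟩ <;> omega
  have hc200 : ℓ ≤ 200 * (ℓ/200 + 1) := by omega
  refine ⟨p+q+r+6*m+2, W p q r m, by omega, ?_, ?_, ?_, ?_⟩
  · intro i _
    unfold W
    split_ifs <;> decide
  · exact (sumW hp hq hr hm).trans hsum
  · intro x hx y hy
    fin_cases hx <;> fin_cases hy
    · rfl
    · exact e34 hp hq hr hm
    · exact e35 hp hq hr hm
    · exact (e34 hp hq hr hm).symm
    · rfl
    · exact e45 hp hq hr hm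
    · exact (e35 hp hq hr hm).symm
    · exact (e45 hp hq hr hm).symm
    · rfl
  · intro x hx y hy
    fin_cases hx <;> fin_cases hy
    · -- (3,3)
      refine final_step hc200 ?_
      apply count_ge (s0 := 0) (d := 1) _ _ _ (by norm_num)
      intro k hk
      apply window _ _ _ (by omega)
      intro j hj
      rw [ite_self]
      exact w3a (by omega)
    · -- (3,4)
      refine final_step hc200 ?_
      apply count_ge (s0 := p+1) (d := 2) _ _ _ (by norm_num)
      intro k hk
      apply window _ _ _ (by omega)
      intro j hj
      rcases Nat.mod_two_eq_zero_or_one j with h2 | h2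
      · rw [if_pos h2]; exact w3b (by omega) (by omega) (by omega)
      · rw [if_neg (by omega)]; exact w4b (by omega) (by omega) (by omega)
    · -- (3,5)
      refine final_step hc200 ?_
      apply count_ge (s0 := p+2*m+1) (d := 2) _ _ _ (by norm_num)
      intro k hk
      apply window _ _ _ (by omega)
      intro j hj
      rcases Nat.mod_two_eq_zero_or_one j with h2 | h2
      · rw [if_pos h2]; exact w3c (by omega) (by omega) (by omega)
      · rw [if_neg (by omega)]; exact w5c (by omega) (by omega) (by omega)
    · -- (4,3)
      refine final_step hc200 ?_
      apply count_ge (s0 := p) (d := 2) _ _ _ (by norm_num)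
      intro k hk
      apply window _ _ _ (by omega)
      intro j hj
      rcases Nat.mod_two_eq_zero_or_one j with h2 | h2
      · rw [if_pos h2]; exact w4b (by omega) (by omega) (by omega)
      · rw [if_neg (by omega)]; exact w3b (by omega) (by omega) (by omega)
    · -- (4,4)
      refine final_step hc200 ?_
      apply count_ge (s0 := p+4*m) (d := 1) _ _ _ (by norm_num)
      intro k hk
      apply window _ _ _ (by omega)
      intro j hj
      rw [ite_self]
      exact w4d (by omega) (by omega)
    · -- (4,5)
      refine final_step hc200 ?_
      apply count_ge (s0 := p+4*m+q+1) (d := 2) _ _ _ (by norm_num)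
      intro k hk
      apply window _ _ _ (by omega)
      intro j hj
      rcases Nat.mod_two_eq_zero_or_one j with h2 | h2
      · rw [if_pos h2]; exact w4e (by omega) (by omega) (by omega)
      · rw [if_neg (by omega)]; exact w5e (by omega) (by omega) (by omega)
    · -- (5,3)
      refine final_step hc200 ?_
      apply count_ge (s0 := p+2*m) (d := 2) _ _ _ (by norm_num)
      intro k hk
      apply window _ _ _ (by omega)
      intro j hj
      rcases Nat.mod_two_eq_zero_or_one j with h2 | h2
      · rw [if_pos h2]; exact w5c (by omega) (by omega) (by omega)
      · rw [if_neg (by omega)]; exact w3c (by omega) (by omega) (by omega)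
    · -- (5,4)
      refine final_step hc200 ?_
      apply count_ge (s0 := p+4*m+q) (d := 2) _ _ _ (by norm_num)
      intro k hk
      apply window _ _ _ (by omega)
      intro j hj
      rcases Nat.mod_two_eq_zero_or_one j with h2 | h2
      · rw [if_pos h2]; exact w5e (by omega) (by omega) (by omega)
      · rw [if_neg (by omega)]; exact w4e (by omega) (by omega) (by omega)
    · -- (5,5)
      refine final_step hc200 ?_
      apply count_ge (s0 := p+6*m+q) (d := 1) _ _ _ (by norm_num)
      intro k hk
      apply window _ _ _ (by omega)
      intro j hj
      rw [ite_self]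
      exact w5f (by omega) (by omega)
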